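/- Let G be a self-complementary graph with an antimorphism that is the product of exactly two cycles, one of which has length 4. Then either G contains C_5 as an induced subgraph, or G has a skew partition, or G has a symmetric partition. -/
import Mathlib


def IsAntimorphism {V : Type*} (G : SimpleGraph V) (τ : Equiv.Perm V) : Prop :=
  ∀ a b : V, a ≠ b → (G.Adj a b ↔ ¬ G.Adj (τ a) (τ b))

def IsSymmetricPartition {V : Type*} (G : SimpleGraph V) (A B C D : Set V) : Prop :=
  (A.Nonempty ∧ B.Nonempty ∧ C.Nonempty ∧ D.Nonempty ∧
   Disjoint A B ∧ Disjoint A C ∧ Disjoint A D ∧ Disjoint B C ∧ Disjoint B D ∧ Disjoint C D ∧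
   (∀ x ∈ A, ∀ y ∈ B, G.Adj x y) ∧ (∀ x ∈ C, ∀ y ∈ D, G.Adj x y) ∧
   (∀ x ∈ A, ∀ y ∈ D, ¬ G.Adj x y) ∧ (∀ x ∈ B, ∀ y ∈ C, ¬ G.Adj x y)) ∧
  A ∪ B ∪ C ∪ D = Set.univ

def IsSkewPartition {V : Type*} (G : SimpleGraph V) (A B C D : Set V) : Prop :=
  (A.Nonempty ∧ B.Nonempty ∧ C.Nonempty ∧ D.Nonempty ∧
   Disjoint A B ∧ Disjoint A C ∧ Disjoint A D ∧ Disjoint B C ∧ Disjoint B D ∧ Disjoint C D ∧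
   (∀ x ∈ A, ∀ y ∈ B, ¬ G.Adj x y) ∧ (∀ x ∈ C, ∀ y ∈ D, G.Adj x y)) ∧
  A ∪ B ∪ C ∪ D = Set.univ

/-- `G` contains an induced cycle on 5 vertices. -/
def HasInducedC5 {V : Type*} (G : SimpleGraph V) : Prop :=
  ∃ v : Fin 5 → V, Function.Injective v ∧
    ∀ i j : Fin 5, i ≠ j → (G.Adj (v i) (v j) ↔ (j = i + 1 ∨ i = j + 1))

/-- skew partition ({u},{v},{w},{z,x}) for the m = 1 case -/
lemma skew1 {V : Type*} {G : SimpleGraph V} (u v w z x : V)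
    (huv : ¬ G.Adj u v) (hwz : G.Adj w z) (hwx : G.Adj w x)
    (duv : u ≠ v) (duw : u ≠ w) (duz : u ≠ z) (dux : u ≠ x)
    (dvw : v ≠ w) (dvz : v ≠ z) (dvx : v ≠ x) (dzx : z ≠ x)
    (hcov : ∀ t : V, t = u ∨ t = v ∨ t = w ∨ t = z ∨ t = x) :
    IsSkewPartition G {u} {v} {w} ({z, x} : Set V) := by
  have dwz := hwz.ne; have dwx := hwx.ne
  refine ⟨⟨⟨u, rfl⟩, ⟨v, rfl⟩, ⟨w, rfl⟩, ⟨z, by simp⟩, ?_, ?_, ?_, ?_, ?_, ?_, ?_, ?_⟩, ?_⟩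
  · simp [duv]
  · simp [duw]
  · simp [Set.disjoint_left]; tauto
  · simp [dvw]
  · simp [Set.disjoint_left]; tauto
  · simp [Set.disjoint_left]; tauto
  · intro p hp q hq; simp at hp hq; subst hp; subst hq; exact huv
  · intro p hp q hq; simp at hp hq; subst hp
    rcases hq with h | h <;> subst h <;> assumption
  · ext t; simp; exact (hcov t).imp id (Or.imp id (Or.imp id Or.symm)) |>.elim (fun h => by tauto) (fun h => by tauto)


/-- generic skew partition ({u,v}, e''SB, {w,z}, e''SD) for m ≥ 2 cases -/
lemma skewK {V : Type*} {G : SimpleGraph V} {m : ℕ} (u v w z : V) (e : ZMod m → V)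
    (SB SD : Set (ZMod m))
    (he : Function.Injective e)
    (hAB : ∀ i ∈ SB, ¬ G.Adj u (e i) ∧ ¬ G.Adj v (e i))
    (hCD : ∀ i ∈ SD, G.Adj w (e i) ∧ G.Adj z (e i))
    (hSBne : SB.Nonempty) (hSDne : SD.Nonempty)
    (hSdisj : ∀ i, ¬ (i ∈ SB ∧ i ∈ SD))
    (duv : u ≠ v) (duw : u ≠ w) (duz : u ≠ z) (dvw : v ≠ w) (dvz : v ≠ z) (dwz : w ≠ z)
    (hne : ∀ i, e i ≠ u ∧ e i ≠ v ∧ e i ≠ w ∧ e i ≠ z)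
    (hcov : ∀ t : V, t = u ∨ t = v ∨ t = w ∨ t = z ∨ ∃ i, (i ∈ SB ∨ i ∈ SD) ∧ t = e i) :
    IsSkewPartition G ({u, v} : Set V) (e '' SB) ({w, z} : Set V) (e '' SD) := by
  obtain ⟨i0, hi0⟩ := hSBne; obtain ⟨i1, hi1⟩ := hSDne
  refine ⟨⟨⟨u, by simp⟩, ⟨e i0, ⟨i0, hi0, rfl⟩⟩, ⟨w, by simp⟩, ⟨e i1, ⟨i1, hi1, rfl⟩⟩,
      ?_, ?_, ?_, ?_, ?_, ?_, ?_, ?_⟩, ?_⟩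
  · simp only [Set.disjoint_left, Set.mem_insert_iff, Set.mem_singleton_iff]
    rintro p (rfl | rfl) ⟨i, _, hi⟩ <;> [exact (hne i).1 hi; exact (hne i).2.1 hi]
  · simp [Set.disjoint_left]; tauto
  · simp only [Set.disjoint_left, Set.mem_insert_iff, Set.mem_singleton_iff]
    rintro p (rfl | rfl) ⟨i, _, hi⟩ <;> [exact (hne i).1 hi; exact (hne i).2.1 hi]
  · simp only [Set.disjoint_left, Set.mem_image, Set.mem_insert_iff, Set.mem_singleton_iff]
    rintro p ⟨i, _, rfl⟩ (rfl | rfl) <;> [exact (hne i).2.2.1 rfl; exact (hne i).2.2.2 rfl]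
  · simp only [Set.disjoint_left, Set.mem_image]
    rintro p ⟨i, hi, rfl⟩ ⟨j, hj, hji⟩
    exact hSdisj i ⟨hi, he hji ▸ hj⟩
  · simp only [Set.disjoint_left, Set.mem_insert_iff, Set.mem_singleton_iff, Set.mem_image]
    rintro p (rfl | rfl) ⟨i, _, hi⟩ <;> [exact (hne i).2.2.1 hi; exact (hne i).2.2.2 hi]
  · rintro p (rfl | rfl) q ⟨i, hi, rfl⟩
    · exact (hAB i hi).1
    · exact (hAB i hi).2
  · rintro p (rfl | rfl) q ⟨i, hi, rfl⟩
    · exact (hCD i hi).1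
    · exact (hCD i hi).2
  · ext t
    simp only [Set.mem_union, Set.mem_insert_iff, Set.mem_singleton_iff, Set.mem_image,
      Set.mem_univ, iff_true]
    rcases hcov t with rfl | rfl | rfl | rfl | ⟨i, hi | hi, rfl⟩
    · exact Or.inl (Or.inl (Or.inl (Or.inl rfl)))
    · exact Or.inl (Or.inl (Or.inl (Or.inr rfl)))
    · exact Or.inl (Or.inr (Or.inl rfl))
    · exact Or.inl (Or.inr (Or.inr rfl))
    · exact Or.inl (Or.inl (Or.inr ⟨i, hi, rfl⟩))
    · exact Or.inr ⟨i, hi, rfl⟩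

/-- generic symmetric partition ({u}∪e''SA, {v}, {w}∪e''SC, {z}) -/
lemma symmK {V : Type*} {G : SimpleGraph V} {m : ℕ} (u v w z : V) (e : ZMod m → V)
    (SA SC : Set (ZMod m))
    (he : Function.Injective e)
    (huv : G.Adj u v) (hwz : G.Adj w z) (huz : ¬ G.Adj u z) (hvw : ¬ G.Adj v w)
    (hSA : ∀ i ∈ SA, G.Adj v (e i) ∧ ¬ G.Adj z (e i))
    (hSC : ∀ i ∈ SC, G.Adj z (e i) ∧ ¬ G.Adj v (e i))
    (hSdisj : ∀ i, ¬ (i ∈ SA ∧ i ∈ SC))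
    (duw : u ≠ w) (duz : u ≠ z) (dvz : v ≠ z) (dvw' : v ≠ w)
    (hne : ∀ i, e i ≠ u ∧ e i ≠ v ∧ e i ≠ w ∧ e i ≠ z)
    (hcov : ∀ t : V, t = u ∨ t = v ∨ t = w ∨ t = z ∨ ∃ i, (i ∈ SA ∨ i ∈ SC) ∧ t = e i) :
    IsSymmetricPartition G ({u} ∪ e '' SA) ({v} : Set V) ({w} ∪ e '' SC) ({z} : Set V) := by
  have duv := huv.ne; have dwz := hwz.ne
  refine ⟨⟨⟨u, Or.inl rfl⟩, ⟨v, rfl⟩, ⟨w, Or.inl rfl⟩, ⟨z, rfl⟩,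
      ?_, ?_, ?_, ?_, ?_, ?_, ?_, ?_, ?_, ?_⟩, ?_⟩
  · simp only [Set.disjoint_left, Set.mem_union, Set.mem_singleton_iff, Set.mem_image]
    rintro p (rfl | ⟨i, _, rfl⟩) rfl
    · exact duv rfl
    · exact (hne i).2.1 rfl
  · simp only [Set.disjoint_left, Set.mem_union, Set.mem_singleton_iff, Set.mem_image]
    rintro p (rfl | ⟨i, hi, rfl⟩) (h | ⟨j, hj, hji⟩)
    · exact duw h
    · exact (hne j).1 hji
    · exact (hne i).2.2.1 h
    · exact hSdisj i ⟨hi, he hji ▸ hj⟩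
  · simp only [Set.disjoint_left, Set.mem_union, Set.mem_singleton_iff, Set.mem_image]
    rintro p (rfl | ⟨i, _, rfl⟩) rfl
    · exact duz rfl
    · exact (hne i).2.2.2 rfl
  · simp only [Set.disjoint_left, Set.mem_union, Set.mem_singleton_iff, Set.mem_image]
    rintro p rfl (h | ⟨j, _, hj⟩)
    · exact dvw' h
    · exact (hne j).2.1 hj
  · simp [Set.disjoint_left]; exact dvz
  · simp only [Set.disjoint_left, Set.mem_union, Set.mem_singleton_iff, Set.mem_image]
    rintro p (rfl | ⟨i, _, rfl⟩) rfl
    · exact dwz rfl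
    · exact (hne i).2.2.2 rfl
  · rintro p (rfl | ⟨i, hi, rfl⟩) q rfl
    · exact huv
    · exact ((hSA i hi).1).symm
  · rintro p (rfl | ⟨i, hi, rfl⟩) q rfl
    · exact hwz
    · exact ((hSC i hi).1).symm
  · rintro p (rfl | ⟨i, hi, rfl⟩) q rfl
    · exact huz
    · exact fun h => (hSA i hi).2 h.symm
  · rintro p rfl q (rfl | ⟨i, hi, rfl⟩)
    · exact hvw
    · exact (hSC i hi).2
  · ext t
    simp only [Set.mem_union, Set.mem_singleton_iff, Set.mem_image, Set.mem_univ, iff_true]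
    rcases hcov t with rfl | rfl | rfl | rfl | ⟨i, hi | hi, rfl⟩
    · exact Or.inl (Or.inl (Or.inl (Or.inl rfl)))
    · exact Or.inl (Or.inl (Or.inr rfl))
    · exact Or.inl (Or.inr (Or.inl rfl))
    · exact Or.inr rfl
    · exact Or.inl (Or.inl (Or.inl (Or.inr ⟨i, hi, rfl⟩)))
    · exact Or.inl (Or.inr (Or.inr ⟨i, hi, rfl⟩))
lemma hasC5_of {V : Type*} {G : SimpleGraph V} (v0 v1 v2 v3 v4 : V)
    (e01 : G.Adj v0 v1) (e12 : G.Adj v1 v2) (e23 : G.Adj v2 v3) (e34 : G.Adj v3 v4)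
    (e40 : G.Adj v4 v0)
    (n02 : ¬ G.Adj v0 v2) (n13 : ¬ G.Adj v1 v3) (n24 : ¬ G.Adj v2 v4)
    (n03 : ¬ G.Adj v0 v3) (n14 : ¬ G.Adj v1 v4)
    (d02 : v0 ≠ v2) (d13 : v1 ≠ v3) (d24 : v2 ≠ v4) (d03 : v0 ≠ v3) (d14 : v1 ≠ v4) :
    HasInducedC5 G := by
  have d01 := e01.ne; have d12 := e12.ne; have d23 := e23.ne; have d34 := e34.ne
  have d04 := e40.ne.symm
  refine ⟨![v0,v1,v2,v3,v4], ?_, ?_⟩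
  · intro i j h
    fin_cases i <;> fin_cases j <;> simp_all
  · intro i j hij
    have n20 : ¬ G.Adj v2 v0 := fun h => n02 h.symm
    have n31 : ¬ G.Adj v3 v1 := fun h => n13 h.symm
    have n42 : ¬ G.Adj v4 v2 := fun h => n24 h.symm
    have n30 : ¬ G.Adj v3 v0 := fun h => n03 h.symm
    have n41 : ¬ G.Adj v4 v1 := fun h => n14 h.symm
    have e10 := e01.symm; have e21 := e12.symm; have e32 := e23.symm
    have e43 := e34.symm; have e04 := e40.symm
    fin_cases i <;> fin_cases j <;> simp_all

lemma propE {A E : Prop} (h : A ↔ (A ↔ E)) : E := by tauto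

lemma propStep {A B C E : Prop} (h1 : A ↔ (B ↔ E)) (h2 : B ↔ ¬C) : A ↔ (C ↔ ¬E) := by tauto

lemma propChain {A B C D E : Prop} (k1 : A ↔ ¬B) (k2 : B ↔ ¬C) (k3 : C ↔ ¬D)
    (k4 : D ↔ ¬E) : E ↔ A := by tauto


set_option maxHeartbeats 1600000 in
/-- A self-complementary graph whose antimorphism is the product of exactly two cycles,
one of them of length 4, has an induced `C₅`, a skew partition or a symmetric partition. -/
theorem main_theorem {V : Type*} (G : SimpleGraph V) (τ : Equiv.Perm V)
    (hτ : IsAntimorphism G τ)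
    (a b c d : V) (habcd : [a, b, c, d].Nodup)
    (h1 : τ a = b) (h2 : τ b = c) (h3 : τ c = d) (h4 : τ d = a)
    (m : ℕ) (hm : 1 ≤ m) (e : ZMod m → V) (he : Function.Injective e)
    (hec : ∀ i, τ (e i) = e (i + 1))
    (hdisj : ∀ i, e i ∉ ({a, b, c, d} : Set V))
    (hcover : ∀ v : V, v ∈ ({a, b, c, d} : Set V) ∨ v ∈ Set.range e) :
    HasInducedC5 G ∨ (∃ A B C D : Set V, IsSkewPartition G A B C D) ∨
      (∃ A B C D : Set V, IsSymmetricPartition G A B C D) := by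
  classical
  have hnd := habcd
  simp only [List.nodup_cons, List.mem_cons, List.not_mem_nil, or_false,
    List.mem_singleton, List.nodup_nil, and_true, not_or] at hnd
  obtain ⟨⟨hab, hac, had⟩, ⟨hbc, hbd⟩, hcd, -⟩ := hnd
  have hne : ∀ i, e i ≠ a ∧ e i ≠ b ∧ e i ≠ c ∧ e i ≠ d := by
    intro i; have := hdisj i; simp only [Set.mem_insert_iff, Set.mem_singleton_iff, not_or] at this
    exact this
  -- adjacency relations inside {a,b,c,d}
  have hKab : G.Adj a b ↔ ¬ G.Adj b c := by have := hτ a b hab; rwa [h1, h2] at this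
  have hKbc : G.Adj b c ↔ ¬ G.Adj c d := by have := hτ b c hbc; rwa [h2, h3] at this
  have hKcd : G.Adj c d ↔ ¬ G.Adj d a := by have := hτ c d hcd; rwa [h3, h4] at this
  have hKac : G.Adj a c ↔ ¬ G.Adj b d := by have := hτ a c hac; rwa [h1, h3] at this
  -- adjacency relations between {a,b,c,d} and the cycle
  have hA : ∀ i, G.Adj a (e i) ↔ ¬ G.Adj b (e (i+1)) := by
    intro i; have := hτ a (e i) (fun h => (hne i).1 h.symm); rwa [h1, hec] at this
  have hB : ∀ i, G.Adj b (e i) ↔ ¬ G.Adj c (e (i+1)) := by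
    intro i; have := hτ b (e i) (fun h => (hne i).2.1 h.symm); rwa [h2, hec] at this
  have hC : ∀ i, G.Adj c (e i) ↔ ¬ G.Adj d (e (i+1)) := by
    intro i; have := hτ c (e i) (fun h => (hne i).2.2.1 h.symm); rwa [h3, hec] at this
  have hD : ∀ i, G.Adj d (e i) ↔ ¬ G.Adj a (e (i+1)) := by
    intro i; have := hτ d (e i) (fun h => (hne i).2.2.2 h.symm); rwa [h4, hec] at this
  have hEE : ∀ i j, i ≠ j → (G.Adj (e i) (e j) ↔ ¬ G.Adj (e (i+1)) (e (j+1))) := by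
    intro i j hij; have := hτ (e i) (e j) (fun h => hij (he h)); rwa [hec, hec] at this
  rcases eq_or_lt_of_le hm with hm1 | hm2
  · -- ===== case m = 1 =====
    have hm1' : m = 1 := hm1.symm
    subst hm1'
    have hone : ∀ i : ZMod 1, i = 0 := by decide
    have hxne := hne 0
    have hbx : G.Adj b (e 0) ↔ ¬ G.Adj a (e 0) := by
      have h := hA 0; rw [hone (0+1)] at h; exact iff_not_comm.mp h
    have hcx : G.Adj c (e 0) ↔ G.Adj a (e 0) := by
      have h := hB 0; rw [hone (0+1)] at h
      exact (iff_not_comm.mp h).trans (hbx.not.trans not_not)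
    have hdx : G.Adj d (e 0) ↔ ¬ G.Adj a (e 0) := by
      have h := hC 0; rw [hone (0+1)] at h
      exact (iff_not_comm.mp h).trans hcx.not
    have hcov : ∀ t : V, t = a ∨ t = b ∨ t = c ∨ t = d ∨ t = e 0 := by
      intro t
      rcases hcover t with h | ⟨i, rfl⟩
      · simp only [Set.mem_insert_iff, Set.mem_singleton_iff] at h; tauto
      · rw [hone i]; tauto
    clear hτ h1 h2 h3 h4 hec hdisj hcover he hm hA hB hC hD hEE habcd hone hne hm1
    by_cases P : G.Adj a b <;> by_cases Q : G.Adj a c <;> by_cases R : G.Adj a (e 0)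
    · -- P Q R : skew ({b},{d},{a},{c,x})
      exact Or.inr (Or.inl ⟨_, _, _, _, skew1 b d a c (e 0) (hKac.mp Q) Q R hbd
        (Ne.symm hab) hbc (Ne.symm hxne.2.1) (Ne.symm had) (Ne.symm hcd) (Ne.symm hxne.2.2.2)
        (Ne.symm hxne.2.2.1) (fun t => by
          rcases hcov t with h|h|h|h|h
          exacts [Or.inr (Or.inr (Or.inl h)), Or.inl h, Or.inr (Or.inr (Or.inr (Or.inl h))),
            Or.inr (Or.inl h), Or.inr (Or.inr (Or.inr (Or.inr h)))])⟩)
    · -- P Q ¬R : C5 (b,a,c,d,x)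
      have hcdP : G.Adj c d := not_not.mp (fun h => (hKab.mp P) (hKbc.mpr h))
      refine Or.inl (hasC5_of b a c d (e 0) P.symm Q hcdP (hdx.mpr R)
        ((hbx.mpr R).symm) (hKab.mp P) (fun h => (hKcd.mp hcdP) h.symm) (fun h => R (hcx.mp h))
        (hKac.mp Q) R hbc had (Ne.symm hxne.2.2.1) hbd
        (Ne.symm hxne.1))
    · -- P ¬Q R : C5 (a,b,d,c,x)
      have hbdQ : G.Adj b d := not_not.mp (fun h => Q (hKac.mpr h))
      have hcdP : G.Adj c d := not_not.mp (fun h => (hKab.mp P) (hKbc.mpr h))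
      refine Or.inl (hasC5_of a b d c (e 0) P hbdQ hcdP.symm (hcx.mpr R) R.symm
        (fun h => (hKcd.mp hcdP) h.symm) (hKab.mp P) (fun h => (hdx.mp h) R) Q
        (fun h => (hbx.mp h) R) had hbc (Ne.symm hxne.2.2.2) hac
        (Ne.symm hxne.2.1))
    · -- P ¬Q ¬R : skew ({a},{c},{b},{d,x})
      have hbdQ : G.Adj b d := not_not.mp (fun h => Q (hKac.mpr h))
      exact Or.inr (Or.inl ⟨_, _, _, _, skew1 a c b d (e 0) Q hbdQ (hbx.mpr R) hac
        hab had (Ne.symm hxne.1) (Ne.symm hbc) hcd (Ne.symm hxne.2.2.1)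
        (Ne.symm hxne.2.2.2) (fun t => by
          rcases hcov t with h|h|h|h|h
          exacts [Or.inl h, Or.inr (Or.inr (Or.inl h)), Or.inr (Or.inl h),
            Or.inr (Or.inr (Or.inr (Or.inl h))), Or.inr (Or.inr (Or.inr (Or.inr h)))])⟩)
    · -- ¬P Q R : skew ({b},{d},{c},{a,x})
      exact Or.inr (Or.inl ⟨_, _, _, _, skew1 b d c a (e 0) (hKac.mp Q) Q.symm
        (hcx.mpr R) hbd hbc (Ne.symm hab) (Ne.symm hxne.2.1) (Ne.symm hcd) (Ne.symm had)
        (Ne.symm hxne.2.2.2) (Ne.symm hxne.1) (fun t => by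
          rcases hcov t with h|h|h|h|h
          exacts [Or.inr (Or.inr (Or.inr (Or.inl h))), Or.inl h, Or.inr (Or.inr (Or.inl h)),
            Or.inr (Or.inl h), Or.inr (Or.inr (Or.inr (Or.inr h)))])⟩)
    · -- ¬P Q ¬R : C5 (a,c,b,x,d)
      have hbcP : G.Adj b c := not_not.mp (fun h => P (hKab.mpr h))
      have hncd : ¬ G.Adj c d := hKbc.mp hbcP
      have hdaP : G.Adj d a := not_not.mp (fun h => hncd (hKcd.mpr h))
      refine Or.inl (hasC5_of a c b (e 0) d Q hbcP.symm (hbx.mpr R) ((hdx.mpr R).symm) hdaP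
        P (fun h => R (hcx.mp h)) (hKac.mp Q) R
        hncd hab (Ne.symm hxne.2.2.1) hbd (Ne.symm hxne.1)
        hcd)
    · -- ¬P ¬Q R : C5 (a,d,b,c,x)
      have hbcP : G.Adj b c := not_not.mp (fun h => P (hKab.mpr h))
      have hncd : ¬ G.Adj c d := hKbc.mp hbcP
      have hdaP : G.Adj d a := not_not.mp (fun h => hncd (hKcd.mpr h))
      have hbdQ : G.Adj b d := not_not.mp (fun h => Q (hKac.mpr h))
      refine Or.inl (hasC5_of a d b c (e 0) hdaP.symm hbdQ.symm hbcP (hcx.mpr R) R.symm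
        P (fun h => hncd h.symm) (fun h => (hbx.mp h) R)
        Q (fun h => (hdx.mp h) R) hab (Ne.symm hcd) (Ne.symm hxne.2.1) hac
        (Ne.symm hxne.2.2.2))
    · -- ¬P ¬Q ¬R : skew ({a},{c},{d},{b,x})
      have hbdQ : G.Adj b d := not_not.mp (fun h => Q (hKac.mpr h))
      exact Or.inr (Or.inl ⟨_, _, _, _, skew1 a c d b (e 0) Q hbdQ.symm (hdx.mpr R) hac
        had hab (Ne.symm hxne.1) hcd (Ne.symm hbc) (Ne.symm hxne.2.2.1)
        (Ne.symm hxne.2.1) (fun t => by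
          rcases hcov t with h|h|h|h|h
          exacts [Or.inl h, Or.inr (Or.inr (Or.inr (Or.inl h))), Or.inr (Or.inl h),
            Or.inr (Or.inr (Or.inl h)), Or.inr (Or.inr (Or.inr (Or.inr h)))])⟩)
  · -- ===== case m ≥ 2 =====
    haveI : NeZero m := ⟨by omega⟩
    haveI : Fact (1 < m) := ⟨hm2⟩
    have iter : ∀ (k : ℕ) (i j : ZMod m), i ≠ j →
        (G.Adj (e i) (e j) ↔ (G.Adj (e (i + (k : ZMod m))) (e (j + (k : ZMod m))) ↔ Even k)) := by
      intro k
      induction k with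
      | zero => intro i j _; simp
      | succ k ih =>
        intro i j hij
        have hh1 := ih i j hij
        have hh2 := hEE (i + (k : ZMod m)) (j + (k : ZMod m))
          (fun h => hij (add_right_cancel h))
        rw [Nat.cast_succ, ← add_assoc, ← add_assoc, Nat.even_add_one]
        exact propStep hh1 hh2
    have hEvenm : Even m := by
      have h := iter m 0 1 zero_ne_one
      rw [ZMod.natCast_self, add_zero, add_zero] at h
      exact propE h
    obtain ⟨l, hl⟩ := hEvenm
    have hlne : ((l : ℕ) : ZMod m) ≠ 0 := by
      intro h
      have hd := (ZMod.natCast_eq_zero_iff l m).mp h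
      have := Nat.le_of_dvd (by omega) hd
      omega
    have hEvenl : Even l := by
      have h := iter l 0 ((l : ℕ) : ZMod m) (fun h => hlne h.symm)
      rw [zero_add] at h
      have hll : ((l : ℕ) : ZMod m) + ((l : ℕ) : ZMod m) = 0 := by
        rw [← Nat.cast_add, ← hl, ZMod.natCast_self]
      rw [hll] at h
      have hsy : G.Adj (e ((l : ℕ) : ZMod m)) (e 0) ↔ G.Adj (e 0) (e ((l : ℕ) : ZMod m)) :=
        ⟨fun h => h.symm, fun h => h.symm⟩
      rw [hsy] at h
      exact propE h
    have hm4 : (4 : ℕ) ∣ m := by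
      obtain ⟨t, ht⟩ := hEvenl
      exact ⟨t, by omega⟩
    set π := ZMod.castHom hm4 (ZMod 4) with hπdef
    -- adjacency of b, c, d to cycle vertices in terms of a
    have hb1 : ∀ i, G.Adj b (e i) ↔ ¬ G.Adj a (e (i - 1)) := by
      intro i
      have h := hA (i - 1); rw [show i - 1 + 1 = i by ring] at h
      exact iff_not_comm.mp h
    have hc2 : ∀ i, G.Adj c (e i) ↔ G.Adj a (e (i - 2)) := by
      intro i
      have h := hB (i - 1); rw [show i - 1 + 1 = i by ring] at h
      have h2 := hb1 (i - 1); rw [show i - 1 - 1 = i - 2 by ring] at h2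
      exact (iff_not_comm.mp h).trans (h2.not.trans not_not)
    have hd3 : ∀ i, G.Adj d (e i) ↔ ¬ G.Adj a (e (i - 3)) := by
      intro i
      have h := hC (i - 1); rw [show i - 1 + 1 = i by ring] at h
      have h2 := hc2 (i - 1); rw [show i - 1 - 2 = i - 3 by ring] at h2
      exact (iff_not_comm.mp h).trans h2.not
    -- period 4
    have hper4 : ∀ i, G.Adj a (e i) ↔ G.Adj a (e (i + 4)) := by
      intro i
      have k1 := hA i
      have k2 := hB (i + 1); rw [show i + 1 + 1 = i + 2 by ring] at k2
      have k3 := hC (i + 2); rw [show i + 2 + 1 = i + 3 by ring] at k3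
      have k4 := hD (i + 3); rw [show i + 3 + 1 = i + 4 by ring] at k4
      exact (propChain k1 k2 k3 k4).symm
    have hperN : ∀ (t : ℕ) (i : ZMod m),
        G.Adj a (e (i + ((4 * t : ℕ) : ZMod m))) ↔ G.Adj a (e i) := by
      intro t
      induction t with
      | zero => intro i; norm_num
      | succ t ih =>
        intro i
        have hc : ((4 * (t + 1) : ℕ) : ZMod m) = ((4 * t : ℕ) : ZMod m) + 4 := by
          push_cast; ring
        rw [hc, ← add_assoc]
        exact ((hper4 (i + ((4 * t : ℕ) : ZMod m))).symm).trans (ih i)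
    have hclass : ∀ i j : ZMod m, π i = π j → (G.Adj a (e i) ↔ G.Adj a (e j)) := by
      intro i j hij
      have h1 : ZMod.cast (j - i) = (0 : ZMod 4) := by
        have h0 : π (j - i) = 0 := by rw [map_sub, hij, sub_self]
        rwa [hπdef, ZMod.castHom_apply] at h0
      have h0 : (((j - i).val : ℕ) : ZMod 4) = 0 := by rw [ZMod.natCast_val]; exact h1
      obtain ⟨t, ht⟩ := (ZMod.natCast_eq_zero_iff _ 4).mp h0
      have hji : j = i + ((4 * t : ℕ) : ZMod m) := by
        rw [← ht, ZMod.natCast_val, ZMod.cast_id]; ring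
      rw [hji]
      exact (hperN t i).symm
    -- ZMod 4 arithmetic helpers
    have htot : ∀ x : ZMod 4, (x = 0 ∨ x = 2) ∨ (x = 1 ∨ x = 3) := by decide
    have hexcl : ∀ x : ZMod 4, ¬ ((x = 0 ∨ x = 2) ∧ (x = 1 ∨ x = 3)) := by decide
    have hm1o : ∀ x : ZMod 4, (x = 0 ∨ x = 2) → (x - 1 = 1 ∨ x - 1 = 3) := by decide
    have hm3o : ∀ x : ZMod 4, (x = 0 ∨ x = 2) → (x - 3 = 1 ∨ x - 3 = 3) := by decide
    have hm2o : ∀ x : ZMod 4, (x = 1 ∨ x = 3) → (x - 2 = 1 ∨ x - 2 = 3) := by decide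
    have hm1e : ∀ x : ZMod 4, (x = 1 ∨ x = 3) → (x - 1 = 0 ∨ x - 1 = 2) := by decide
    have hm3e : ∀ x : ZMod 4, (x = 1 ∨ x = 3) → (x - 3 = 0 ∨ x - 3 = 2) := by decide
    have hm2e : ∀ x : ZMod 4, (x = 0 ∨ x = 2) → (x - 2 = 0 ∨ x - 2 = 2) := by decide
    have hπsub1 : ∀ i : ZMod m, π (i - 1) = π i - 1 := fun i => by rw [map_sub, map_one]
    have hπsub2 : ∀ i : ZMod m, π (i - 2) = π i - 2 := fun i => by
      rw [map_sub, map_ofNat]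
    have hπsub3 : ∀ i : ZMod m, π (i - 3) = π i - 3 := fun i => by
      rw [map_sub, map_ofNat]
    have hπ0 : π (0 : ZMod m) = 0 := map_zero π
    have hπ1 : π (1 : ZMod m) = 1 := map_one π
    set SOd : Set (ZMod m) := {i | π i = 1 ∨ π i = 3} with hSOd
    set SEv : Set (ZMod m) := {i | π i = 0 ∨ π i = 2} with hSEv
    have hOd1 : (1 : ZMod m) ∈ SOd := Or.inl hπ1
    have hEv0 : (0 : ZMod m) ∈ SEv := Or.inl hπ0
    have hSdisj : ∀ i : ZMod m, ¬ (i ∈ SEv ∧ i ∈ SOd) := fun i h => hexcl (π i) h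
    have hScov : ∀ i : ZMod m, i ∈ SEv ∨ i ∈ SOd := fun i => htot (π i)
    have hcovK : ∀ t : V, t = a ∨ t = b ∨ t = c ∨ t = d ∨ ∃ i, t = e i := by
      intro t
      rcases hcover t with h | ⟨i, rfl⟩
      · simp only [Set.mem_insert_iff, Set.mem_singleton_iff] at h; tauto
      · exact Or.inr (Or.inr (Or.inr (Or.inr ⟨i, rfl⟩)))
    by_cases hLA : ∀ i ∈ SOd, G.Adj a (e i)
    · -- skew ({b,d}, Ev, {a,c}, Od)
      refine Or.inr (Or.inl ⟨_, _, _, _, skewK b d a c e SEv SOd he ?_ ?_ ⟨0, hEv0⟩ ⟨1, hOd1⟩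
        hSdisj hbd (Ne.symm hab) hbc (Ne.symm had) (Ne.symm hcd) hac
        (fun i => ⟨(hne i).2.1, (hne i).2.2.2, (hne i).1, (hne i).2.2.1⟩) ?_⟩)
      · intro i hi
        constructor
        · intro h
          exact (hb1 i).mp h (hLA (i - 1) (by rw [hSOd, Set.mem_setOf_eq, hπsub1]; exact hm1o _ hi))
        · intro h
          exact (hd3 i).mp h (hLA (i - 3) (by rw [hSOd, Set.mem_setOf_eq, hπsub3]; exact hm3o _ hi))
      · intro i hi
        refine ⟨hLA i hi, ?_⟩
        rw [hc2]
        exact hLA (i - 2) (by rw [hSOd, Set.mem_setOf_eq, hπsub2]; exact hm2o _ hi)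
      · intro t
        rcases hcovK t with h | h | h | h | ⟨i, rfl⟩
        · exact Or.inr (Or.inr (Or.inl h))
        · exact Or.inl h
        · exact Or.inr (Or.inr (Or.inr (Or.inl h)))
        · exact Or.inr (Or.inl h)
        · exact Or.inr (Or.inr (Or.inr (Or.inr ⟨i, hScov i, rfl⟩)))
    · by_cases hLB : ∀ i ∈ SOd, ¬ G.Adj a (e i)
      · -- skew ({a,c}, Od, {b,d}, Ev)
        refine Or.inr (Or.inl ⟨_, _, _, _, skewK a c b d e SOd SEv he ?_ ?_ ⟨1, hOd1⟩ ⟨0, hEv0⟩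
          (fun i h => hexcl (π i) ⟨h.2, h.1⟩) hac hab had (Ne.symm hbc) hcd hbd
          (fun i => ⟨(hne i).1, (hne i).2.2.1, (hne i).2.1, (hne i).2.2.2⟩) ?_⟩)
        · intro i hi
          refine ⟨hLB i hi, ?_⟩
          rw [hc2]
          exact hLB (i - 2) (by rw [hSOd, Set.mem_setOf_eq, hπsub2]; exact hm2o _ hi)
        · intro i hi
          constructor
          · rw [hb1]
            exact hLB (i - 1) (by rw [hSOd, Set.mem_setOf_eq, hπsub1]; exact hm1o _ hi)
          · rw [hd3]
            exact hLB (i - 3) (by rw [hSOd, Set.mem_setOf_eq, hπsub3]; exact hm3o _ hi)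
        · intro t
          rcases hcovK t with h | h | h | h | ⟨i, rfl⟩
          · exact Or.inl h
          · exact Or.inr (Or.inr (Or.inl h))
          · exact Or.inr (Or.inl h)
          · exact Or.inr (Or.inr (Or.inr (Or.inl h)))
          · exact Or.inr (Or.inr (Or.inr (Or.inr ⟨i, (hScov i).symm.imp id id, rfl⟩)))
      · by_cases hLC : ∀ i ∈ SEv, G.Adj a (e i)
        · -- skew ({b,d}, Od, {a,c}, Ev)
          refine Or.inr (Or.inl ⟨_, _, _, _, skewK b d a c e SOd SEv he ?_ ?_ ⟨1, hOd1⟩ ⟨0, hEv0⟩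
            (fun i h => hexcl (π i) ⟨h.2, h.1⟩) hbd (Ne.symm hab) hbc (Ne.symm had)
            (Ne.symm hcd) hac
            (fun i => ⟨(hne i).2.1, (hne i).2.2.2, (hne i).1, (hne i).2.2.1⟩) ?_⟩)
          · intro i hi
            constructor
            · intro h
              exact (hb1 i).mp h
                (hLC (i - 1) (by rw [hSEv, Set.mem_setOf_eq, hπsub1]; exact hm1e _ hi))
            · intro h
              exact (hd3 i).mp h
                (hLC (i - 3) (by rw [hSEv, Set.mem_setOf_eq, hπsub3]; exact hm3e _ hi))
          · intro i hi
            refine ⟨hLC i hi, ?_⟩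
            rw [hc2]
            exact hLC (i - 2) (by rw [hSEv, Set.mem_setOf_eq, hπsub2]; exact hm2e _ hi)
          · intro t
            rcases hcovK t with h | h | h | h | ⟨i, rfl⟩
            · exact Or.inr (Or.inr (Or.inl h))
            · exact Or.inl h
            · exact Or.inr (Or.inr (Or.inr (Or.inl h)))
            · exact Or.inr (Or.inl h)
            · exact Or.inr (Or.inr (Or.inr (Or.inr ⟨i, (hScov i).symm.imp id id, rfl⟩)))
        · by_cases hLD : ∀ i ∈ SEv, ¬ G.Adj a (e i)
          · -- skew ({a,c}, Ev, {b,d}, Od)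
            refine Or.inr (Or.inl ⟨_, _, _, _, skewK a c b d e SEv SOd he ?_ ?_ ⟨0, hEv0⟩
              ⟨1, hOd1⟩ hSdisj hac hab had (Ne.symm hbc) hcd hbd
              (fun i => ⟨(hne i).1, (hne i).2.2.1, (hne i).2.1, (hne i).2.2.2⟩) ?_⟩)
            · intro i hi
              refine ⟨hLD i hi, ?_⟩
              rw [hc2]
              exact hLD (i - 2) (by rw [hSEv, Set.mem_setOf_eq, hπsub2]; exact hm2e _ hi)
            · intro i hi
              constructor
              · rw [hb1]
                exact hLD (i - 1) (by rw [hSEv, Set.mem_setOf_eq, hπsub1]; exact hm1e _ hi)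
              · rw [hd3]
                exact hLD (i - 3) (by rw [hSEv, Set.mem_setOf_eq, hπsub3]; exact hm3e _ hi)
            · intro t
              rcases hcovK t with h | h | h | h | ⟨i, rfl⟩
              · exact Or.inl h
              · exact Or.inr (Or.inr (Or.inl h))
              · exact Or.inr (Or.inl h)
              · exact Or.inr (Or.inr (Or.inr (Or.inl h)))
              · exact Or.inr (Or.inr (Or.inr (Or.inr ⟨i, hScov i, rfl⟩)))
          · -- α is non-constant on both parity classes : symmetric partition
            push_neg at hLA hLB hLC hLD
            obtain ⟨i1, hi1o, hi1⟩ := hLA   -- odd, not adjacent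
            obtain ⟨i2, hi2o, hi2⟩ := hLB   -- odd, adjacent
            obtain ⟨j1, hj1e, hj1⟩ := hLC   -- even, not adjacent
            obtain ⟨j2, hj2e, hj2⟩ := hLD   -- even, adjacent
            have hπadd2 : ∀ i : ZMod m, π (i + 2) = π i + 2 := fun i => by
              rw [map_add, map_ofNat]
            have hoo : π i1 ≠ π i2 := fun h => hi1 ((hclass i1 i2 h).mpr hi2)
            have hee : π j1 ≠ π j2 := fun h => hj1 ((hclass j1 j2 h).mpr hj2)
            have hzo : ∀ x y z : ZMod 4, (x = 1 ∨ x = 3) → (y = 1 ∨ y = 3) → (z = 1 ∨ z = 3) →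
                y ≠ z → ((x = y ∧ x + 2 = z) ∨ (x = z ∧ x + 2 = y)) := by decide
            have hze : ∀ x y z : ZMod 4, (x = 0 ∨ x = 2) → (y = 0 ∨ y = 2) → (z = 0 ∨ z = 2) →
                y ≠ z → ((x = y ∧ x + 2 = z) ∨ (x = z ∧ x + 2 = y)) := by decide
            have hflip : ∀ i : ZMod m, G.Adj a (e (i + 2)) ↔ ¬ G.Adj a (e i) := by
              intro i
              rcases htot (π i) with hi | hi
              · rcases hze (π i) (π j2) (π j1) hi hj2e hj1e (Ne.symm hee) with ⟨hx, hx2⟩ | ⟨hx, hx2⟩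
                · refine iff_of_false ?_ ?_
                  · intro h
                    exact hj1 ((hclass (i + 2) j1 (by rw [hπadd2, hx2])).mp h)
                  · intro h
                    exact h ((hclass i j2 hx).mpr hj2)
                · refine iff_of_true ?_ ?_
                  · exact (hclass (i + 2) j2 (by rw [hπadd2, hx2])).mpr hj2
                  · intro h
                    exact hj1 ((hclass i j1 hx).mp h)
              · rcases hzo (π i) (π i2) (π i1) hi hi2o hi1o (Ne.symm hoo) with ⟨hx, hx2⟩ | ⟨hx, hx2⟩
                · refine iff_of_false ?_ ?_
                  · intro h
                    exact hi1 ((hclass (i + 2) i1 (by rw [hπadd2, hx2])).mp h)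
                  · intro h
                    exact h ((hclass i i2 hx).mpr hi2)
                · refine iff_of_true ?_ ?_
                  · exact (hclass (i + 2) i2 (by rw [hπadd2, hx2])).mpr hi2
                  · intro h
                    exact hi1 ((hclass i i1 hx).mp h)
            -- flip in subtraction form
            have hflip' : ∀ i : ZMod m, G.Adj a (e (i - 1)) ↔ ¬ G.Adj a (e (i - 3)) := by
              intro i
              have h := hflip (i - 3); rw [show i - 3 + 2 = i - 1 by ring] at h
              exact h
            have hflip'' : ∀ i : ZMod m, G.Adj a (e i) ↔ ¬ G.Adj a (e (i - 2)) := by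
              intro i
              have h := hflip (i - 2); rw [show i - 2 + 2 = i by ring] at h
              exact h
            by_cases P : G.Adj a b
            · -- symmetric ({a} ∪ (N(b) ∩ cycle), {b}, {c} ∪ (N(d) ∩ cycle), {d})
              have hcdP : G.Adj c d := not_not.mp (fun h => (hKab.mp P) (hKbc.mpr h))
              refine Or.inr (Or.inr ⟨_, _, _, _, symmK a b c d e
                {i | G.Adj b (e i)} {i | G.Adj d (e i)} he P hcdP
                (fun h => (hKcd.mp hcdP) h.symm) (hKab.mp P) ?_ ?_ ?_ hac had hbd hbc
                (fun i => ⟨(hne i).1, (hne i).2.1, (hne i).2.2.1, (hne i).2.2.2⟩) ?_⟩)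
              · intro i hi
                exact ⟨hi, fun h => ((hb1 i).mp hi) ((hflip' i).mpr ((hd3 i).mp h))⟩
              · intro i hi
                exact ⟨hi, fun h => ((hb1 i).mp h) ((hflip' i).mpr ((hd3 i).mp hi))⟩
              · rintro i ⟨h1, h2⟩
                exact ((hb1 i).mp h1) ((hflip' i).mpr ((hd3 i).mp h2))
              · intro t
                rcases hcovK t with h | h | h | h | ⟨i, rfl⟩
                · exact Or.inl h
                · exact Or.inr (Or.inl h)
                · exact Or.inr (Or.inr (Or.inl h))
                · exact Or.inr (Or.inr (Or.inr (Or.inl h)))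
                · refine Or.inr (Or.inr (Or.inr (Or.inr ?_)))
                  by_cases hBi : G.Adj b (e i)
                  · exact ⟨i, Or.inl hBi, rfl⟩
                  · have hα : G.Adj a (e (i - 1)) := not_not.mp (fun h => hBi ((hb1 i).mpr h))
                    exact ⟨i, Or.inr ((hd3 i).mpr ((hflip' i).mp hα)), rfl⟩
            · -- symmetric ({b} ∪ (N(c) ∩ cycle), {c}, {d} ∪ (N(a) ∩ cycle), {a})
              have hbcP : G.Adj b c := not_not.mp (fun h => P (hKab.mpr h))
              have hncd : ¬ G.Adj c d := hKbc.mp hbcP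
              have hdaP : G.Adj d a := not_not.mp (fun h => hncd (hKcd.mpr h))
              refine Or.inr (Or.inr ⟨_, _, _, _, symmK b c d a e
                {i | G.Adj c (e i)} {i | G.Adj a (e i)} he hbcP hdaP
                (fun h => P h.symm) hncd ?_ ?_ ?_ hbd (Ne.symm hab) (Ne.symm hac) hcd
                (fun i => ⟨(hne i).2.1, (hne i).2.2.1, (hne i).2.2.2, (hne i).1⟩) ?_⟩)
              · intro i hi
                exact ⟨hi, fun h => ((hflip'' i).mp h) ((hc2 i).mp hi)⟩
              · intro i hi
                exact ⟨hi, fun h => ((hflip'' i).mp hi) ((hc2 i).mp h)⟩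
              · rintro i ⟨h1, h2⟩
                exact ((hflip'' i).mp h2) ((hc2 i).mp h1)
              · intro t
                rcases hcovK t with h | h | h | h | ⟨i, rfl⟩
                · exact Or.inr (Or.inr (Or.inr (Or.inl h)))
                · exact Or.inl h
                · exact Or.inr (Or.inl h)
                · exact Or.inr (Or.inr (Or.inl h))
                · refine Or.inr (Or.inr (Or.inr (Or.inr ?_)))
                  by_cases hCi : G.Adj c (e i)
                  · exact ⟨i, Or.inl hCi, rfl⟩
                  · have hα : ¬ G.Adj a (e (i - 2)) := fun h => hCi ((hc2 i).mpr h)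
                    exact ⟨i, Or.inr ((hflip'' i).mpr hα), rfl⟩
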